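/- If c satisfies (C1) and F(n) = ∏_{j ∣ n} c(j), then for all n, k ≥ 1: gcd(∏_{j ∣ n, j ∤ k} c(j), ∏_{j ∣ k, j ∤ n} c(j)) = 1. -/

import Mathlib

theorem coprime_complementary_products (c : ℕ → ℕ)
    (hpos : ∀ j, 1 ≤ j → 1 ≤ c j)
    (hC1 : ∀ k n, 1 ≤ k → k < n → Nat.gcd n k ≠ k → Nat.gcd (c n) (c k) = 1) :
    ∀ n k, 1 ≤ n → 1 ≤ k →
      Nat.gcd (∏ j ∈ n.divisors.filter (fun j => ¬ j ∣ k), c j)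
              (∏ j ∈ k.divisors.filter (fun j => ¬ j ∣ n), c j) = 1 := by
  intro n k hn hk
  apply Nat.Coprime.prod_left
  intro j hj
  apply Nat.Coprime.prod_right
  intro i hi
  simp only [Finset.mem_filter, Nat.mem_divisors] at hj hi
  obtain ⟨⟨hjn, hn0⟩, hjk⟩ := hj
  obtain ⟨⟨hik, hk0⟩, hin⟩ := hi
  have hjpos : 1 ≤ j := Nat.pos_of_dvd_of_pos hjn (Nat.pos_of_ne_zero hn0)
  have hipos : 1 ≤ i := Nat.pos_of_dvd_of_pos hik (Nat.pos_of_ne_zero hk0)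
  have hji : ¬ j ∣ i := fun h => hjk (h.trans hik)
  have hij : ¬ i ∣ j := fun h => hin (h.trans hjn)
  rcases lt_trichotomy j i with h | h | h
  · exact Nat.coprime_comm.mp (hC1 j i hjpos h (fun hg => hji (hg ▸ Nat.gcd_dvd_left i j)))
  · exact absurd (h ▸ dvd_refl j) hji
  · exact hC1 i j hipos h (fun hg => hij (hg ▸ Nat.gcd_dvd_left j i))
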